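/- The function α ↦ F(α,0) = αS^in + (1-α)·λ((1-α)D) is strictly convex on [0,1], with F_α(α,0) = S^in − λ((1-α)D) − (1-α)D·λ'((1-α)D) and F_αα(α,0) = 2D·λ'((1-α)D) + (1-α)D²·λ''((1-α)D) > 0. -/

import Mathlib

section aux

variable {lam : ℝ → ℝ} {D Sin : ℝ}

lemma stmt7_mem (hD : 0 < D) {α : ℝ} (hα : α ∈ Set.Icc (0:ℝ) 1) :
    (1 - α) * D ∈ Set.Icc (0:ℝ) D := by
  obtain ⟨h0, h1⟩ := hα
  constructor
  · nlinarith
  · nlinarith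

lemma stmt7_hF (hD : 0 < D)
    (hlamdiff : ∀ x ∈ Set.Icc (0:ℝ) D, DifferentiableAt ℝ lam x)
    {α : ℝ} (hα : α ∈ Set.Icc (0:ℝ) 1) :
    HasDerivAt (fun a => a * Sin + (1 - a) * lam ((1 - a) * D))
      (Sin - lam ((1 - α) * D) - (1 - α) * D * deriv lam ((1 - α) * D)) α := by
  have hinner : HasDerivAt (fun a : ℝ => (1 - a) * D) (-D) α := by
    have : HasDerivAt (fun a : ℝ => (1 - a) * D) ((-1) * D) α :=
      (((hasDerivAt_id α).const_sub 1)).mul_const D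
    simpa using this
  have hlamc : HasDerivAt (fun a : ℝ => lam ((1 - a) * D))
      (deriv lam ((1 - α) * D) * (-D)) α :=
    ((hlamdiff _ (stmt7_mem hD hα)).hasDerivAt).comp α hinner
  have h1 : HasDerivAt (fun a : ℝ => (1 - a)) (-1) α := by
    simpa using (hasDerivAt_id α).const_sub 1
  have hmul : HasDerivAt (fun a : ℝ => (1 - a) * lam ((1 - a) * D))
      ((-1) * lam ((1 - α) * D) + (1 - α) * (deriv lam ((1 - α) * D) * (-D))) α :=
    h1.mul hlamc
  have hlin : HasDerivAt (fun a : ℝ => a * Sin) Sin α := by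
    simpa using (hasDerivAt_id α).mul_const Sin
  have := hlin.add hmul
  refine this.congr_deriv ?_
  ring

lemma stmt7_hG (hD : 0 < D)
    (hlamdiff : ∀ x ∈ Set.Icc (0:ℝ) D, DifferentiableAt ℝ lam x)
    (hlamdiff2 : ∀ x ∈ Set.Icc (0:ℝ) D, DifferentiableAt ℝ (deriv lam) x)
    {α : ℝ} (hα : α ∈ Set.Icc (0:ℝ) 1) :
    HasDerivAt (fun a => Sin - lam ((1 - a) * D) - (1 - a) * D * deriv lam ((1 - a) * D))
      (2 * D * deriv lam ((1 - α) * D)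
        + (1 - α) * D ^ 2 * deriv (deriv lam) ((1 - α) * D)) α := by
  have hinner : HasDerivAt (fun a : ℝ => (1 - a) * D) (-D) α := by
    simpa using (((hasDerivAt_id α).const_sub 1)).mul_const D
  have hlamc : HasDerivAt (fun a : ℝ => lam ((1 - a) * D))
      (deriv lam ((1 - α) * D) * (-D)) α :=
    ((hlamdiff _ (stmt7_mem hD hα)).hasDerivAt).comp α hinner
  have hlam'c : HasDerivAt (fun a : ℝ => deriv lam ((1 - a) * D))
      (deriv (deriv lam) ((1 - α) * D) * (-D)) α :=
    HasDerivAt.comp (h₂ := deriv lam) α ((hlamdiff2 _ (stmt7_mem hD hα)).hasDerivAt) hinner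
  have hmul : HasDerivAt (fun a : ℝ => (1 - a) * D * deriv lam ((1 - a) * D))
      ((-D) * deriv lam ((1 - α) * D)
        + (1 - α) * D * (deriv (deriv lam) ((1 - α) * D) * (-D))) α :=
    hinner.mul hlam'c
  have := ((hlamc.const_sub Sin)).sub hmul
  refine this.congr_deriv ?_
  ring

end aux

/-- α ↦ F(α,0) = α·S^in + (1-α)·λ((1-α)D) is strictly convex on [0,1], with the
given first and (positive) second derivative formulas. -/
theorem stmt_7 (lam : ℝ → ℝ) (D Sin : ℝ)
    (hD : 0 < D)
    (hlamdiff : ∀ x ∈ Set.Icc (0:ℝ) D, DifferentiableAt ℝ lam x)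
    (hlamdiff2 : ∀ x ∈ Set.Icc (0:ℝ) D, DifferentiableAt ℝ (deriv lam) x)
    (hlam' : ∀ x ∈ Set.Icc (0:ℝ) D, 0 < deriv lam x)
    (hlam'' : ∀ x ∈ Set.Icc (0:ℝ) D, 0 ≤ deriv (deriv lam) x) :
    StrictConvexOn ℝ (Set.Icc (0:ℝ) 1)
      (fun α => α * Sin + (1 - α) * lam ((1 - α) * D)) ∧
    (∀ α ∈ Set.Ioo (0:ℝ) 1,
      deriv (fun a => a * Sin + (1 - a) * lam ((1 - a) * D)) α
        = Sin - lam ((1 - α) * D) - (1 - α) * D * deriv lam ((1 - α) * D)) ∧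
    (∀ α ∈ Set.Ioo (0:ℝ) 1,
      deriv (fun a => deriv (fun b => b * Sin + (1 - b) * lam ((1 - b) * D)) a) α
        = 2 * D * deriv lam ((1 - α) * D)
          + (1 - α) * D ^ 2 * deriv (deriv lam) ((1 - α) * D) ∧
      0 < 2 * D * deriv lam ((1 - α) * D)
          + (1 - α) * D ^ 2 * deriv (deriv lam) ((1 - α) * D)) := by
  set F : ℝ → ℝ := fun a => a * Sin + (1 - a) * lam ((1 - a) * D) with hFdef
  set G : ℝ → ℝ := fun a => Sin - lam ((1 - a) * D) - (1 - a) * D * deriv lam ((1 - a) * D)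
    with hGdef
  have hderivF : ∀ α ∈ Set.Icc (0:ℝ) 1, deriv F α = G α := fun α hα =>
    (stmt7_hF hD hlamdiff hα).deriv
  have hpos : ∀ α ∈ Set.Ioo (0:ℝ) 1,
      0 < 2 * D * deriv lam ((1 - α) * D)
        + (1 - α) * D ^ 2 * deriv (deriv lam) ((1 - α) * D) := by
    intro α hα
    have hmem := stmt7_mem hD (Set.mem_Icc.2 ⟨le_of_lt hα.1, le_of_lt hα.2⟩)
    have h1 := hlam' _ hmem
    have h2 := hlam'' _ hmem
    have : (0:ℝ) < 1 - α := by linarith [hα.2]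
    nlinarith [mul_pos hD h1, mul_nonneg (mul_nonneg this.le (sq_nonneg D)) h2]
  have hderiv2 : ∀ α ∈ Set.Ioo (0:ℝ) 1,
      deriv (deriv F) α = 2 * D * deriv lam ((1 - α) * D)
        + (1 - α) * D ^ 2 * deriv (deriv lam) ((1 - α) * D) := by
    intro α hα
    have heq : deriv F =ᶠ[nhds α] G := by
      filter_upwards [Ioo_mem_nhds hα.1 hα.2] with x hx
      exact hderivF x (Set.mem_Icc.2 ⟨le_of_lt hx.1, le_of_lt hx.2⟩)
    rw [heq.deriv_eq]
    exact (stmt7_hG hD hlamdiff hlamdiff2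
      (Set.mem_Icc.2 ⟨le_of_lt hα.1, le_of_lt hα.2⟩)).deriv
  refine ⟨?_, fun α hα => (stmt7_hF hD hlamdiff
      (Set.mem_Icc.2 ⟨le_of_lt hα.1, le_of_lt hα.2⟩)).deriv,
    fun α hα => ⟨hderiv2 α hα, hpos α hα⟩⟩
  apply strictConvexOn_of_deriv2_pos (convex_Icc 0 1)
  · intro x hx
    exact ((stmt7_hF hD hlamdiff hx).differentiableAt).continuousAt.continuousWithinAt
  · intro x hx
    rw [interior_Icc] at hx
    have h2 := hderiv2 x hx
    have hp := hpos x hx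
    simp only [Function.iterate_succ, Function.iterate_zero, Function.comp_apply, id_eq]
    rw [h2]
    exact hp
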